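/- arXiv:math/0508510 — 2 statements merged into one kernel-verified Lean document; each statement's English description precedes it below -/
import Mathlib

section
/- Let N ≥ 1 be an integer and let S = Σ_{i=0}^{N−1} X^i Y^{N−1−i} in the polynomial ring ℚ[X,Y]. Then the quotient of ℚ[X,Y] by the ideal generated by X^N, Y^N, S, and X is isomorphic as a ℚ-algebra to ℚ[Y]/(Y^{N−1}). -/
open MvPolynomial in
lemma sub_aeval_X0_zero_mem (p : MvPolynomial (Fin 2) ℚ) :
    p - MvPolynomial.aeval ![(0 : MvPolynomial (Fin 2) ℚ), X 1] p ∈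
      Ideal.span {X (0 : Fin 2)} := by
  induction p using MvPolynomial.induction_on with
  | C a => simp
  | add p q hp hq =>
      have := Ideal.add_mem _ hp hq
      simpa [add_sub_add_comm] using this
  | mul_X p i hp =>
      fin_cases i
      · simp only [map_mul, aeval_X]
        show p * X 0 - aeval _ p * ![(0 : MvPolynomial (Fin 2) ℚ), X 1] 0 ∈ _
        simp only [Matrix.cons_val_zero, mul_zero, sub_zero]
        exact Ideal.mul_mem_left _ p (Ideal.subset_span rfl)
      · simp only [map_mul, aeval_X]
        show p * X 1 - aeval _ p * ![(0 : MvPolynomial (Fin 2) ℚ), X 1] 1 ∈ _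
        simp only [Matrix.cons_val_one, Matrix.head_cons, Matrix.cons_val_zero]
        rw [← sub_mul]
        exact Ideal.mul_mem_right _ _ hp

open MvPolynomial in
/-- For `N ≥ 1` and `S = Σ_{i=0}^{N−1} X^i Y^{N−1−i}`, the quotient
`ℚ[X,Y]/(X^N, Y^N, S, X)` is isomorphic as a `ℚ`-algebra to `ℚ[Y]/(Y^{N−1})`. -/
theorem reduced_theta_homology (N : ℕ) (hN : 1 ≤ N)
    (S : MvPolynomial (Fin 2) ℚ)
    (hS : S = ∑ i ∈ Finset.range N, X (0 : Fin 2) ^ i * X (1 : Fin 2) ^ (N - 1 - i)) :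
    Nonempty ((MvPolynomial (Fin 2) ℚ ⧸
        Ideal.span {X (0 : Fin 2) ^ N, X (1 : Fin 2) ^ N, S, X (0 : Fin 2)}) ≃ₐ[ℚ]
      (Polynomial ℚ ⧸ Ideal.span {(Polynomial.X : Polynomial ℚ) ^ (N - 1)})) := by
  obtain ⟨M, rfl⟩ : ∃ M, N = M + 1 := ⟨N - 1, (Nat.succ_pred_eq_of_pos hN).symm⟩
  set I : Ideal (MvPolynomial (Fin 2) ℚ) :=
    Ideal.span {X (0 : Fin 2) ^ (M + 1), X (1 : Fin 2) ^ (M + 1), S, X (0 : Fin 2)} with hI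
  set J : Ideal (Polynomial ℚ) :=
    Ideal.span {(Polynomial.X : Polynomial ℚ) ^ (M + 1 - 1)} with hJ
  have hX0 : X (0 : Fin 2) ∈ I := Ideal.subset_span (by simp)
  have hSI : S ∈ I := Ideal.subset_span (by simp)
  -- X1^M ∈ I
  have hY : X (1 : Fin 2) ^ M ∈ I := by
    have hsum : S = (∑ i ∈ Finset.range M,
        X (0 : Fin 2) ^ (i + 1) * X (1 : Fin 2) ^ (M + 1 - 1 - (i + 1)))
        + X (0 : Fin 2) ^ 0 * X (1 : Fin 2) ^ (M + 1 - 1 - 0) := by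
      rw [hS, Finset.sum_range_succ']
    have : X (1 : Fin 2) ^ M = S - ∑ i ∈ Finset.range M,
        X (0 : Fin 2) ^ (i + 1) * X (1 : Fin 2) ^ (M + 1 - 1 - (i + 1)) := by
      rw [hsum]; ring_nf; simp
    rw [this]
    refine Ideal.sub_mem _ hSI (Ideal.sum_mem _ fun i _ => ?_)
    rw [pow_succ', mul_assoc]
    exact Ideal.mul_mem_right _ _ hX0
  -- the evaluation map
  let g : Fin 2 → Polynomial ℚ := ![0, Polynomial.X]
  let A : MvPolynomial (Fin 2) ℚ →ₐ[ℚ] Polynomial ℚ := aeval g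
  let f : MvPolynomial (Fin 2) ℚ →ₐ[ℚ] Polynomial ℚ ⧸ J :=
    (Ideal.Quotient.mkₐ ℚ J).comp A
  have hA0 : A (X 0) = 0 := by simp [A, g]
  have hA1 : A (X 1) = Polynomial.X := by simp [A, g]
  have hfsurj : Function.Surjective f := by
    refine (Ideal.Quotient.mkₐ_surjective ℚ J).comp ?_
    intro q
    have : q ∈ Algebra.adjoin ℚ ({Polynomial.X} : Set (Polynomial ℚ)) := by
      rw [Polynomial.adjoin_X]; trivial
    have hle : Algebra.adjoin ℚ ({Polynomial.X} : Set (Polynomial ℚ)) ≤ A.range := by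
      apply Algebra.adjoin_le
      rintro x rfl
      exact ⟨X 1, hA1⟩
    exact hle this
  -- B : lift back
  let B : Polynomial ℚ →ₐ[ℚ] MvPolynomial (Fin 2) ℚ := Polynomial.aeval (X 1)
  have hBA : ∀ p, B (A p) = aeval ![(0 : MvPolynomial (Fin 2) ℚ), X 1] p := by
    intro p
    have : (B.comp A) = aeval ![(0 : MvPolynomial (Fin 2) ℚ), X 1] := by
      apply MvPolynomial.algHom_ext
      intro i
      fin_cases i <;> simp [A, B, g]
    exact congrArg (fun φ => φ p) this
  have hker : I = RingHom.ker f := by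
    have hfeq : ∀ x, f x = Ideal.Quotient.mk J (A x) := fun x => rfl
    apply le_antisymm
    · rw [hI, Ideal.span_le]
      intro x hx
      simp only [Set.mem_insert_iff, Set.mem_singleton_iff] at hx
      have hXN1 : (Polynomial.X : Polynomial ℚ) ^ (M + 1 - 1) ∈ J :=
        Ideal.subset_span rfl
      have key : A x ∈ J := by
        rcases hx with rfl | rfl | rfl | rfl
        · rw [map_pow, hA0, zero_pow (Nat.succ_ne_zero M)]
          exact Ideal.zero_mem J
        · rw [map_pow, hA1]
          have : (Polynomial.X : Polynomial ℚ) ^ (M + 1) =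
              Polynomial.X ^ (M + 1 - 1) * Polynomial.X := by
            simp [pow_succ]
          rw [this]
          exact Ideal.mul_mem_right _ _ hXN1
        · rw [hS, map_sum]
          simp only [map_mul, map_pow, hA0, hA1]
          rw [Finset.sum_eq_single 0]
          · simpa using hXN1
          · intro i _ hi
            rw [zero_pow hi, zero_mul]
          · simp
        · rw [hA0]; exact Ideal.zero_mem J
      show f x = 0
      rw [hfeq, Ideal.Quotient.eq_zero_iff_mem]
      exact key
    · intro p hp
      have hAp : A p ∈ J := by
        have : f p = 0 := hp
        simpa [f, Ideal.Quotient.eq_zero_iff_mem] using this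
      rw [hJ, Ideal.mem_span_singleton] at hAp
      obtain ⟨h, hh⟩ := hAp
      have h1 : p - B (A p) ∈ I := by
        rw [hBA]
        exact Ideal.span_mono (by simp) (sub_aeval_X0_zero_mem p)
      have h2 : B (A p) ∈ I := by
        rw [hh, map_mul, map_pow]
        have hBX : B Polynomial.X = X 1 := by simp [B]
        rw [hBX]
        simpa using Ideal.mul_mem_right _ _ hY
      simpa using Ideal.add_mem _ h1 h2
  exact ⟨(Ideal.quotientEquivAlgOfEq ℚ hker).trans
    (Ideal.quotientKerAlgEquivOfSurjective hfsurj)⟩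
end

section
/- Let N ≥ 1 be an integer and let S = Σ_{i=0}^{N−1} X^i Y^{N−1−i} in ℚ[X,Y]. Then: (1) the ideal of ℚ[X,Y] generated by X^N, Y^N and S equals the ideal generated by X^N and S (since X^N − Y^N = (X−Y)·S, so Y^N lies in the ideal (X^N, S)); and (2) the quotient ring A = ℚ[X,Y]/(X^N, Y^N, S), viewed as a module over ℚ[X]/(X^N) via the algebra map sending X to the class of X, is a free module with basis given by the images of 1, Y, …, Y^{N−2}; in particular it is free of rank N−1. -/
private lemma theta_sum_reflect {A : Type*} [CommRing A] (u v : A) (N : ℕ) :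
    ∑ i ∈ Finset.range N, u ^ i * v ^ (N - 1 - i)
      = ∑ i ∈ Finset.range N, u ^ (N - 1 - i) * v ^ i := by
  rw [← Finset.sum_range_reflect]
  refine Finset.sum_congr rfl fun i hi => ?_
  have h : N - 1 - (N - 1 - i) = i := by
    have := Finset.mem_range.1 hi; omega
  rw [h]

open MvPolynomial in
private lemma theta_part1 (N : ℕ) (hN : 1 ≤ N)
    (S : MvPolynomial (Fin 2) ℚ)
    (hS : S = ∑ i ∈ Finset.range N, X (0 : Fin 2) ^ i * X (1 : Fin 2) ^ (N - 1 - i)) :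
    Ideal.span {X (0 : Fin 2) ^ N, X (1 : Fin 2) ^ N, S}
      = Ideal.span {X (0 : Fin 2) ^ N, S} := by
  refine le_antisymm (Ideal.span_le.2 ?_) (Ideal.span_le.2 ?_)
  · rintro a ha
    simp only [Set.mem_insert_iff, Set.mem_singleton_iff] at ha
    rcases ha with rfl | rfl | rfl
    · exact Ideal.subset_span (by simp)
    · have h := geom_sum₂_mul (X (0 : Fin 2) : MvPolynomial (Fin 2) ℚ) (X 1) N
      rw [← hS] at h
      have h2 : (X (1 : Fin 2) : MvPolynomial (Fin 2) ℚ) ^ N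
          = X (0 : Fin 2) ^ N - S * (X 0 - X 1) := by
        rw [h]; ring
      rw [h2]
      exact sub_mem (Ideal.subset_span (by simp))
        (Ideal.mul_mem_right _ _ (Ideal.subset_span (by simp)))
    · exact Ideal.subset_span (by simp)
  · rintro a ha
    simp only [Set.mem_insert_iff, Set.mem_singleton_iff] at ha
    rcases ha with rfl | rfl
    · exact Ideal.subset_span (by simp)
    · exact Ideal.subset_span (by simp)

set_option synthInstance.maxHeartbeats 1000000 in
set_option maxHeartbeats 1600000 in
open MvPolynomial in
/-- For `N ≥ 1` and `S = Σ_{i=0}^{N−1} X^i Y^{N−1−i}` in `ℚ[X,Y]`: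
(1) the ideal `(X^N, Y^N, S)` equals the ideal `(X^N, S)`; and
(2) the quotient `A = ℚ[X,Y]/(X^N, Y^N, S)`, viewed as a module over `ℚ[X]/(X^N)` via the
algebra map sending `X` to the class of `X`, is free with basis the images of
`1, Y, …, Y^{N−2}`. -/
theorem theta_ideal_and_freeness (N : ℕ) (hN : 1 ≤ N)
    (S : MvPolynomial (Fin 2) ℚ)
    (hS : S = ∑ i ∈ Finset.range N, X (0 : Fin 2) ^ i * X (1 : Fin 2) ^ (N - 1 - i)) :
    Ideal.span {X (0 : Fin 2) ^ N, X (1 : Fin 2) ^ N, S}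
      = Ideal.span {X (0 : Fin 2) ^ N, S} ∧
    ∀ (φ : (Polynomial ℚ ⧸ Ideal.span {(Polynomial.X : Polynomial ℚ) ^ N}) →ₐ[ℚ]
        (MvPolynomial (Fin 2) ℚ ⧸
          Ideal.span {X (0 : Fin 2) ^ N, X (1 : Fin 2) ^ N, S})),
      φ (Ideal.Quotient.mk _ Polynomial.X) = Ideal.Quotient.mk _ (X (0 : Fin 2)) →
      letI := Module.compHom
        (MvPolynomial (Fin 2) ℚ ⧸ Ideal.span {X (0 : Fin 2) ^ N, X (1 : Fin 2) ^ N, S})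
        φ.toRingHom
      ∃ b : Module.Basis (Fin (N - 1)) (Polynomial ℚ ⧸ Ideal.span {(Polynomial.X : Polynomial ℚ) ^ N})
          (MvPolynomial (Fin 2) ℚ ⧸ Ideal.span {X (0 : Fin 2) ^ N, X (1 : Fin 2) ^ N, S}),
        ∀ i : Fin (N - 1), b i = Ideal.Quotient.mk _ (X (1 : Fin 2) ^ (i : ℕ)) := by
  refine ⟨theta_part1 N hN S hS, ?_⟩
  set I : Ideal (MvPolynomial (Fin 2) ℚ) :=
    Ideal.span {X (0 : Fin 2) ^ N, X (1 : Fin 2) ^ N, S} with hI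
  set J : Ideal (Polynomial ℚ) := Ideal.span {(Polynomial.X : Polynomial ℚ) ^ N} with hJ
  set r : Polynomial ℚ ⧸ J := Ideal.Quotient.mk J Polynomial.X with hr
  intro φ hφ
  letI instM : Module (Polynomial ℚ ⧸ J) (MvPolynomial (Fin 2) ℚ ⧸ I) :=
    Module.compHom _ φ.toRingHom
  haveI : Nontrivial (Polynomial ℚ ⧸ J) := by
    refine Ideal.Quotient.nontrivial_iff.mpr fun h => ?_
    rw [hJ, Ideal.span_singleton_eq_top] at h
    exact Polynomial.not_isUnit_X ((isUnit_pow_iff (by omega)).1 h)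
  have hrN : r ^ N = 0 := by
    rw [hr, ← map_pow]
    exact Ideal.Quotient.eq_zero_iff_mem.2 (Ideal.subset_span rfl)
  -- the monic polynomial over the base ring
  set Sb : Polynomial (Polynomial ℚ ⧸ J) :=
    ∑ i ∈ Finset.range N, Polynomial.C (r ^ (N - 1 - i)) * Polynomial.X ^ i with hSb
  have hdegle : Sb.natDegree ≤ N - 1 := by
    refine Polynomial.natDegree_sum_le_of_forall_le _ _ fun i hi => ?_
    exact (Polynomial.natDegree_C_mul_X_pow_le _ _).trans
      (Nat.le_pred_of_lt (Finset.mem_range.1 hi))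
  have hcoeff : Sb.coeff (N - 1) = 1 := by
    rw [hSb, Polynomial.finset_sum_coeff]
    rw [Finset.sum_eq_single_of_mem (N - 1) (Finset.mem_range.2 (by omega))]
    · simp
    · intro j hj hjne
      rw [Polynomial.coeff_C_mul, Polynomial.coeff_X_pow, if_neg (Ne.symm hjne), mul_zero]
  have hmonic : Sb.Monic :=
    Polynomial.monic_of_natDegree_le_of_coeff_eq_one _ hdegle hcoeff
  have hdim : Sb.natDegree = N - 1 :=
    le_antisymm hdegle (Polynomial.le_natDegree_of_ne_zero (by rw [hcoeff]; exact one_ne_zero))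
  -- forward map via AdjoinRoot.lift
  have hSzero : Ideal.Quotient.mk I S = 0 :=
    Ideal.Quotient.eq_zero_iff_mem.2 (Ideal.subset_span (by simp))
  have heval : Polynomial.eval₂ φ.toRingHom (Ideal.Quotient.mk I (X (1 : Fin 2))) Sb = 0 := by
    rw [hSb, Polynomial.eval₂_finset_sum]
    simp only [Polynomial.eval₂_mul, Polynomial.eval₂_C, Polynomial.eval₂_X_pow]
    have hφ' : φ.toRingHom r = Ideal.Quotient.mk I (X (0 : Fin 2)) := hφ
    simp only [Polynomial.eval₂_pow, Polynomial.eval₂_C, map_pow, hφ']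
    rw [← theta_sum_reflect]
    have h0 : Ideal.Quotient.mk I S = 0 := hSzero
    rw [hS] at h0
    simp only [map_sum, map_mul, map_pow] at h0
    exact h0
  set fwd : AdjoinRoot Sb →+* MvPolynomial (Fin 2) ℚ ⧸ I :=
    AdjoinRoot.lift φ.toRingHom (Ideal.Quotient.mk I (X (1 : Fin 2))) heval with hfwd
  have hfwd_of : ∀ b, fwd (AdjoinRoot.of Sb b) = φ b := fun b => AdjoinRoot.lift_of heval
  have hfwd_root : fwd (AdjoinRoot.root Sb) = Ideal.Quotient.mk I (X (1 : Fin 2)) :=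
    AdjoinRoot.lift_root heval
  -- backward map
  set g : MvPolynomial (Fin 2) ℚ →+* AdjoinRoot Sb :=
    (MvPolynomial.eval₂Hom (algebraMap ℚ (AdjoinRoot Sb))
      ![AdjoinRoot.of Sb r, AdjoinRoot.root Sb]) with hg
  have hg0 : g (X (0 : Fin 2)) = AdjoinRoot.of Sb r := by
    simp [hg, MvPolynomial.eval₂Hom_X']
  have hg1 : g (X (1 : Fin 2)) = AdjoinRoot.root Sb := by
    simp [hg, MvPolynomial.eval₂Hom_X']
  have hofN : AdjoinRoot.of Sb r ^ N = 0 := by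
    rw [← map_pow, hrN, map_zero]
  have hz : ∑ i ∈ Finset.range N, AdjoinRoot.of Sb r ^ i * AdjoinRoot.root Sb ^ (N - 1 - i)
      = 0 := by
    have h0 : Polynomial.eval₂ (AdjoinRoot.of Sb) (AdjoinRoot.root Sb)
        (∑ i ∈ Finset.range N, Polynomial.C (r ^ (N - 1 - i)) * Polynomial.X ^ i) = 0 := by
      conv_lhs => rw [← hSb]
      exact AdjoinRoot.eval₂_root Sb
    simp only [Polynomial.eval₂_finset_sum, Polynomial.eval₂_mul, Polynomial.eval₂_C,
      Polynomial.eval₂_X_pow, Polynomial.eval₂_pow, Polynomial.eval₂_X, map_pow] at h0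
    rw [theta_sum_reflect]
    exact h0
  have hrootN : AdjoinRoot.root Sb ^ N = 0 := by
    have h2 : ∑ i ∈ Finset.range N,
        AdjoinRoot.root Sb ^ i * AdjoinRoot.of Sb r ^ (N - 1 - i) = 0 := by
      rw [theta_sum_reflect,
        show (∑ i ∈ Finset.range N,
            AdjoinRoot.root Sb ^ (N - 1 - i) * AdjoinRoot.of Sb r ^ i)
          = ∑ i ∈ Finset.range N,
            AdjoinRoot.of Sb r ^ i * AdjoinRoot.root Sb ^ (N - 1 - i) from
          Finset.sum_congr rfl fun i _ => mul_comm _ _, hz]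
    have h1 := geom_sum₂_mul (AdjoinRoot.root Sb) (AdjoinRoot.of Sb r) N
    rw [h2, zero_mul] at h1
    rw [sub_eq_zero.1 h1.symm, hofN]
  have hker : ∀ a ∈ I, g a = 0 := by
    have hle : I ≤ RingHom.ker g := by
      rw [hI]
      refine Ideal.span_le.2 ?_
      rintro b hb
      simp only [Set.mem_insert_iff, Set.mem_singleton_iff] at hb
      rcases hb with rfl | rfl | rfl
      · simp only [SetLike.mem_coe, RingHom.mem_ker, map_pow, hg0, hofN]
      · simp only [SetLike.mem_coe, RingHom.mem_ker, map_pow, hg1, hrootN]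
      · simp only [SetLike.mem_coe, RingHom.mem_ker]
        rw [hS]
        simp only [map_sum, map_mul, map_pow, hg0, hg1]
        exact hz
    exact fun a ha => hle ha
  set bwd : (MvPolynomial (Fin 2) ℚ ⧸ I) →+* AdjoinRoot Sb :=
    Ideal.Quotient.lift I g hker with hbwd
  have hbwd_mk : ∀ p, bwd (Ideal.Quotient.mk I p) = g p :=
    fun p => Ideal.Quotient.lift_mk I g hker
  -- fwd ∘ bwd = id
  have hcomp1 : fwd.comp bwd = RingHom.id _ := by
    refine Ideal.Quotient.ringHom_ext (MvPolynomial.ringHom_ext (fun a => ?_) (fun i => ?_))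
    · exact RingHom.congr_fun
        (Subsingleton.elim (((fwd.comp bwd).comp (Ideal.Quotient.mk I)).comp MvPolynomial.C)
          (((RingHom.id _).comp (Ideal.Quotient.mk I)).comp MvPolynomial.C)) a
    · fin_cases i
      · simp only [RingHom.comp_apply, RingHom.id_apply, Fin.zero_eta, Fin.isValue]
        rw [hbwd_mk, hg0, hfwd_of]
        exact hφ
      · simp only [RingHom.comp_apply, RingHom.id_apply, Fin.mk_one, Fin.isValue]
        rw [hbwd_mk, hg1, hfwd_root]
  -- bwd ∘ fwd = id
  have hcomp2 : bwd.comp fwd = RingHom.id _ := by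
    have key : (bwd.comp fwd).comp (AdjoinRoot.mk Sb)
        = (RingHom.id _).comp (AdjoinRoot.mk Sb) := by
      refine Polynomial.ringHom_ext' ?_ ?_
      · refine Ideal.Quotient.ringHom_ext (Polynomial.ringHom_ext' (Subsingleton.elim _ _) ?_)
        simp only [RingHom.comp_apply, RingHom.id_apply, AdjoinRoot.mk_C]
        rw [hfwd_of, hφ, hbwd_mk, hg0]
      · simp only [RingHom.comp_apply, RingHom.id_apply]
        rw [show (AdjoinRoot.mk Sb) Polynomial.X = AdjoinRoot.root Sb from rfl,
          hfwd_root, hbwd_mk, hg1]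
    refine RingHom.ext fun z => ?_
    obtain ⟨p, rfl⟩ := AdjoinRoot.mk_surjective z
    exact RingHom.congr_fun key p
  -- ring equivalence
  set e : AdjoinRoot Sb ≃+* (MvPolynomial (Fin 2) ℚ ⧸ I) :=
    RingEquiv.ofRingHom fwd bwd hcomp1 hcomp2 with he
  -- upgrade to a linear equivalence
  set L : AdjoinRoot Sb ≃ₗ[Polynomial ℚ ⧸ J] (MvPolynomial (Fin 2) ℚ ⧸ I) :=
    { e with
      map_smul' := fun b z => by
        obtain ⟨p, rfl⟩ := AdjoinRoot.mk_surjective z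
        show fwd (b • AdjoinRoot.mk Sb p) = φ b * fwd (AdjoinRoot.mk Sb p)
        rw [AdjoinRoot.smul_mk, Polynomial.smul_eq_C_mul]
        simp only [map_mul, AdjoinRoot.mk_C, hfwd_of] } with hL
  have hLapp : ∀ z, L z = fwd z := fun z => rfl
  -- transport the power basis
  refine ⟨((AdjoinRoot.powerBasis' hmonic).basis.map L).reindex
      (finCongr (by simp [hdim])), fun i => ?_⟩
  rw [Module.Basis.reindex_apply, Module.Basis.map_apply, hLapp, PowerBasis.basis_eq_pow]
  simp only [AdjoinRoot.powerBasis'_gen, map_pow, hfwd_root]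
  simp [map_pow]
end
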